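/- Let F be a field, A an associative unital F-algebra, S an F-subspace of A, and (q, p) a pfaffian datum on S. Let x ∈ S satisfy x² = 0 and q(x) = 0, and suppose there exists w ∈ S with p(w) = −w and −x·w + w·p(x) = 1_A. Then p(x) = −x. -/

import Mathlib

/-- Let `F` be a field, `A` an associative unital `F`-algebra, `S` an
`F`-subspace of `A`, and `(q, p)` a pfaffian datum on `S`.  Let `x ∈ S` satisfy `x ^ 2 = 0`
and `q x = 0`, and suppose there exists `w ∈ S` with `p w = -w` and
`-(x * w) + w * p x = 1`.  Then `p x = -x`. -/
theorem pfaffian_adjoint_of_square_zero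
    {F A : Type*} [Field F] [Ring A] [Algebra F A]
    (S : Submodule F A) (q : S → F) (p : S →ₗ[F] S)
    (hqp : ∀ x : S, (x : A) * (p x : A) = q x • (1 : A))
    (hpq : ∀ x : S, (p x : A) * (x : A) = q x • (1 : A))
    (hpp : ∀ x : S, p (p x) = x)
    (x : S) (hx2 : (x : A) ^ 2 = 0) (hqx : q x = 0)
    (w : S) (hw : p w = -w)
    (hbw : -((x : A) * (w : A)) + (w : A) * (p x : A) = 1) :
    p x = -x := by
  set X : A := (x : A) with hX
  set Y : A := (p x : A) with hY
  set W : A := (w : A) with hW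
  have hXX : X * X = 0 := by rw [← sq]; exact hx2
  have hxy : X * Y = 0 := by rw [hY, hX, hqp, hqx, zero_smul]
  have hyx : Y * X = 0 := by rw [hY, hX, hpq, hqx, zero_smul]
  set lam : F := q (x + p x) with hlam
  have hy2 : Y * Y = lam • (1 : A) := by
    have h := hqp (x + p x)
    rw [map_add, hpp] at h
    push_cast at h
    calc Y * Y = (X + Y) * (Y + X) - X * Y - X * X - Y * X := by noncomm_ring
      _ = lam • (1 : A) := by rw [h, hxy, hXX, hyx]; simp [hlam]
  have hA1 : X * W * Y = X := by
    calc X * W * Y = X * (-(X * W) + W * Y) + X * X * W := by noncomm_ring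
      _ = X := by rw [hbw, hXX]; simp
  have hA2 : W * (Y * Y) = X + Y := by
    calc W * (Y * Y) = (-(X * W) + W * Y) * Y + X * W * Y := by noncomm_ring
      _ = X + Y := by rw [hbw, hA1]; noncomm_ring
  have hz : lam • W = X + Y := by
    rw [hy2, mul_smul_comm, mul_one] at hA2
    exact hA2
  by_cases hl : lam = 0
  · rw [hl, zero_smul] at hz
    have hYX : Y = -X := eq_neg_of_add_eq_zero_right hz.symm
    apply Subtype.ext
    push_cast
    exact hYX
  · -- lam ≠ 0 : show x = 0
    have hwy : W * Y = 1 := by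
      have h2 : (X + Y) * Y = lam • (1 : A) := by rw [add_mul, hxy, zero_add, hy2]
      rw [← hz, smul_mul_assoc] at h2
      exact smul_right_injective A hl h2
    have hxw : X * W = 0 := by
      have h3 := hbw
      rw [hwy] at h3
      exact neg_eq_zero.mp (add_eq_right.mp h3)
    have hX0 : X = 0 := by
      rw [← hA1, hxw, zero_mul]
    have hx0 : x = 0 := Subtype.ext hX0
    rw [hx0, map_zero, neg_zero]
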